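/- arXiv:math/0111047 — 2 statements merged into one kernel-verified Lean document; each statement's English description precedes it below -/
import Mathlib

section
/- With the same conventions, ∂³(:a^N:) = 3N ∂(:(∂²a) a^{N−1}:) − 2N :(∂³a) a^{N−1}: + 6·C(N,3)·:(∂a)³ a^{N−3}:. -/
private lemma choose_three_aux (n : ℕ) : (6 * (n+3).choose 3 : ℕ) = (n+3)*((n+2)*(n+1)) := by
  have h2 : ∀ m : ℕ, (m+2).choose 2 * 2 = (m+2)*(m+1) := by
    intro m; induction m with
    | zero => rfl
    | succ k ih =>
      rw [show k+1+2 = (k+2)+1 from rfl, Nat.choose_succ_succ, Nat.choose_one_right,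
        Nat.add_mul, ih]; ring
  have key : (n+3).choose 3 * 6 = (n+3)*(n+2)*(n+1) := by
    induction n with
    | zero => rfl
    | succ k ih =>
      rw [show k+1+3 = (k+3)+1 from rfl, Nat.choose_succ_succ, Nat.add_mul, ih]
      have := h2 (k+1)
      nlinarith [this]
  calc 6 * (n+3).choose 3 = (n+3).choose 3 * 6 := mul_comm _ _
    _ = (n+3)*(n+2)*(n+1) := key
    _ = (n+3)*((n+2)*(n+1)) := mul_assoc _ _ _

/-- Lemma 6.1(v): with factors inside normally ordered products commuting and the
Leibniz rule for `∂`, one has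
`∂³(:aᴺ:) = 3N ∂(:(∂²a) a^{N−1}:) − 2N :(∂³a) a^{N−1}: + 6·C(N,3)·:(∂a)³ a^{N−3}:`. -/
theorem normal_order_third_derivative' (R : Type*) [CommRing R] (d : Derivation ℤ R R)
    (a : R) (N : ℕ) :
    d (d (d (a ^ N))) = (3 * N) • d (d (d a) * a ^ (N - 1))
      - (2 * N) • (d (d (d a)) * a ^ (N - 1))
      + (6 * N.choose 3) • (d a ^ 3 * a ^ (N - 3)) := by
  have h3 : d (3:R) = 0 := by simpa using d.map_natCast 3
  have h2' : d (2:R) = 0 := by simpa using d.map_natCast 2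
  match N with
  | 0 => simp
  | 1 =>
    simp only [pow_one, show Nat.choose 1 3 = 0 from rfl, mul_zero, zero_smul, add_zero,
      Nat.sub_self, pow_zero, mul_one, Nat.mul_one]
    rw [nsmul_eq_mul, nsmul_eq_mul]
    push_cast
    ring
  | 2 =>
    simp only [Derivation.leibniz, Derivation.leibniz_pow, map_nsmul, map_add, smul_eq_mul,
      nsmul_eq_mul, Nat.cast_mul, Nat.cast_add, Nat.cast_ofNat,
      Derivation.map_natCast, h3, h2', map_zero,
      show ((2:ℕ) - 1) = 1 from rfl, show ((2:ℕ) - 3) = 0 from rfl,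
      show Nat.choose 2 3 = 0 from rfl]
    push_cast
    ring
  | (n+3) =>
    simp only [Derivation.leibniz, Derivation.leibniz_pow, map_nsmul, map_add, smul_eq_mul,
      Nat.add_sub_cancel, nsmul_eq_mul, Nat.cast_mul, Nat.cast_add, Nat.cast_ofNat,
      choose_three_aux, Derivation.map_natCast, h3, h2', map_zero,
      show (n+3-1) = n+2 by omega, show (n+3-3) = n by omega]
    push_cast
    ring
end

section
/- Define Θ^{p,q}_{m,n} = ((pn−qm)(p+q−1)/24)·(2p+2q−2+3m+3n−(m+n)²) and Ω^{p,q}_{m,n} as in the paper. Then for all integers p,q,m,n with p+q ≠ 2, the quantity Θ^{p,q}_{m,n} + Ω^{p,q}_{m,n}/(12(p+q−2)) is antisymmetric under simultaneous exchange (p,m) ↔ (q,n). -/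
/-- The structure polynomial `Ω^{p,q}_{m,n}` of the W algebra `𝒲_X`, as a rational
number. -/
def OmegaQ (p q m n : ℤ) : ℚ :=
  ((m*p^3*n^2 + 3*m*p^2*n^2*q - p^2*n*q + p^2*q*n^3 - 3*m*p^2*n^2 + p*n*q
    + 3*m^2*p*n*q - 3*m*p*n^2*q - m^3*q^2*p - p*q*n^3 - m*p*q + m^3*p*q
    + m*p*q^2 + 2*m*p*n^2 - 3*m^2*p*n*q^2 - 2*m^2*n*q + 3*m^2*n*q^2 - m^2*n*q^3 : ℤ) : ℚ)

/-- `Θ^{p,q}_{m,n} = ((pn−qm)(p+q−1)/24)·(2p+2q−2+3m+3n−(m+n)²)`. -/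
def ThetaQ (p q m n : ℤ) : ℚ :=
  (((p*n - q*m)*(p + q - 1) : ℤ) : ℚ) / 24 *
    (((2*p + 2*q - 2 + 3*m + 3*n - (m + n)^2 : ℤ) : ℚ))

/-- The coefficient `Θ^{p,q}_{m,n} + Ω^{p,q}_{m,n}/(12(p+q−2))` of
`:a^{p+q−2}:_{m+n}(τ_*(eαβ))` in the commutator (equation (6.15)) is antisymmetric
under simultaneous exchange `(p,m) ↔ (q,n)`, for all integers `p,q,m,n` with `p+q ≠ 2`. -/
theorem theta_omega_antisymm (p q m n : ℤ) (h : p + q ≠ 2) :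
    ThetaQ q p n m + OmegaQ q p n m / (12 * (((q : ℚ) + (p : ℚ)) - 2))
      = -(ThetaQ p q m n + OmegaQ p q m n / (12 * (((p : ℚ) + (q : ℚ)) - 2))) := by
  have hq : ((p : ℚ) + q) - 2 ≠ 0 := by
    intro hc
    apply h
    have : ((p + q : ℤ) : ℚ) = ((2 : ℤ) : ℚ) := by push_cast; linarith
    exact_mod_cast this
  have hq' : ((q : ℚ) + p) - 2 ≠ 0 := by rw [add_comm]; exact hq
  unfold ThetaQ OmegaQ
  push_cast
  field_simp
  ring
end
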